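/- In the universal bivariant theory M^C_S, the bivariant product defined on generators by [V →h X] • [W →k Y] := [V' → X] (where V' = V ×_X (X ×_Y W) via base change) is associative. -/

import Mathlib

universe u

/-- The fiber product of two maps of types. -/
def Pb {X Y S : Type u} (f : X → S) (g : Y → S) : Type u :=
  {p : X × Y // f p.1 = g p.2}

def Pb.fst {X Y S : Type u} (f : X → S) (g : Y → S) : Pb f g → X := fun p => p.1.1

def Pb.snd {X Y S : Type u} (f : X → S) (g : Y → S) : Pb f g → Y := fun p => p.1.2

/-- A generating cycle `[V →h X]` of the universal bivariant theory
`M^C_S(X →f Y)`: a confined morphism `h : V → X` such that `f ∘ h` is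
specialized. -/
structure Cyc (Conf : ∀ {A B : Type u}, (A → B) → Prop)
    (Spec : ∀ {A B : Type u}, (A → B) → Prop)
    {X Y : Type u} (f : X → Y) : Type (u + 1) where
  V : Type u
  h : V → X
  conf : Conf h
  spec : Spec (f ∘ h)

/-- Isomorphism of cycles over `X`. -/
def isoRel (Conf Spec : ∀ {A B : Type u}, (A → B) → Prop)
    {X Y : Type u} (f : X → Y) (c₁ c₂ : Cyc Conf Spec f) : Prop :=
  ∃ e : c₁.V ≃ c₂.V, c₂.h ∘ e = c₁.h

/-- The universal bivariant theory `M^C_S(X →f Y)`: the free abelian group on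
isomorphism classes of cycles. -/
def UBT (Conf Spec : ∀ {A B : Type u}, (A → B) → Prop)
    {X Y : Type u} (f : X → Y) : Type (u + 1) :=
  FreeAbelianGroup (Quot (isoRel Conf Spec f))

/-- The bivariant product on generators: `[V →h X] • [W →k Y] := [V' →h∘k'' X]`,
where `V' = V ×_X (X ×_Y W)`.  (The proofs `hc`, `hs` that the resulting morphism
is again confined with specialized composite follow from the closure of the classes
`C` and `S` under composition and base change; they are proof-irrelevant data.) -/
def prodCyc {Conf Spec : ∀ {A B : Type u}, (A → B) → Prop}
    {X Y Z : Type u} {f : X → Y} {g : Y → Z}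
    (c₁ : Cyc Conf Spec f) (c₂ : Cyc Conf Spec g)
    (hc : Conf fun p : Pb c₁.h (Pb.fst f c₂.h) => c₁.h p.1.1)
    (hs : Spec ((g ∘ f) ∘ fun p : Pb c₁.h (Pb.fst f c₂.h) => c₁.h p.1.1)) :
    Cyc Conf Spec (g ∘ f) :=
  ⟨Pb c₁.h (Pb.fst f c₂.h), fun p => c₁.h p.1.1, hc, hs⟩

/-!
STATEMENT 7: the bivariant product of the universal bivariant theory `M^C_S` is
associative.  Since the product is defined on generators and extended bilinearly,
this amounts to the equality, in `M^C_S(X → W)`, of the classes of the two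
iterated products of generators. -/
theorem prodCyc_assoc {Conf Spec : ∀ {A B : Type u}, (A → B) → Prop}
    {X Y Z W : Type u} (f : X → Y) (g : Y → Z) (k : Z → W)
    (c₁ : Cyc Conf Spec f) (c₂ : Cyc Conf Spec g) (c₃ : Cyc Conf Spec k)
    (hc₁) (hs₁) (hc₂) (hs₂) (hc₃) (hs₃) (hc₄) (hs₄) :
    (FreeAbelianGroup.of
        (Quot.mk (isoRel Conf Spec (k ∘ (g ∘ f)))
          (prodCyc (f := g ∘ f) (g := k)
            (prodCyc (f := f) (g := g) c₁ c₂ hc₁ hs₁) c₃ hc₂ hs₂))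
      : UBT Conf Spec (k ∘ (g ∘ f)))
      = FreeAbelianGroup.of
          (Quot.mk (isoRel Conf Spec (k ∘ (g ∘ f)))
            (prodCyc (f := f) (g := k ∘ g) c₁
              (prodCyc (f := g) (g := k) c₂ c₃ hc₃ hs₃) hc₄ hs₄)) := by
  refine congrArg FreeAbelianGroup.of (Quot.sound ⟨?_, ?_⟩)
  · refine
      { toFun := fun p =>
          ⟨(p.1.1.1.1, ⟨(p.1.1.1.2.1.1,
            ⟨(p.1.1.1.2.1.2, ⟨(c₂.h p.1.1.1.2.1.2, p.1.2.1.2), ?_⟩), rfl⟩),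
            p.1.1.1.2.2⟩), p.1.1.2⟩
        invFun := fun p =>
          ⟨(⟨(p.1.1, ⟨(p.1.2.1.1, p.1.2.1.2.1.1), p.1.2.2⟩), p.2⟩,
            ⟨(p.1.2.1.1, p.1.2.1.2.1.2.1.2), ?_⟩), p.2⟩
        left_inv := ?_
        right_inv := ?_ }
    · obtain ⟨⟨⟨⟨v, ⟨⟨x, w⟩, hq⟩⟩, ha⟩, ⟨⟨x', u⟩, hb⟩⟩, hp⟩ := p
      simp only at *
      calc g (c₂.h w) = g (f x) := by rw [hq]
        _ = c₃.h u := by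
          have : x = x' := by simpa [Pb.fst] using ha.symm.trans hp
          rw [this]; exact hb
    · obtain ⟨⟨v, ⟨⟨x, ⟨⟨w, ⟨⟨y, u⟩, hs'⟩⟩, hr⟩⟩, hq⟩⟩, hp⟩ := p
      simp only at *
      exact (congrArg g (hq.trans hr)).trans hs'
    · intro p
      obtain ⟨⟨⟨⟨v, ⟨⟨x, w⟩, hq⟩⟩, ha⟩, ⟨⟨x', u⟩, hb⟩⟩, hp⟩ := p
      have hx : x = x' := by simpa [Pb.fst] using ha.symm.trans hp
      subst hx
      rfl
    · intro p
      obtain ⟨⟨v, ⟨⟨x, ⟨⟨w, ⟨⟨y, u⟩, hs'⟩⟩, hr⟩⟩, hq⟩⟩, hp⟩ := p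
      have : c₂.h w = y := hr
      subst this
      rfl
  · rfl
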